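/- Let N_{1|0} : M_{d₀}(ℂ) → M_{d₁}(ℂ), N_{2|1} : M_{d₁}(ℂ) → M_{d₂}(ℂ), and N_{2|0} : M_{d₀}(ℂ) → M_{d₂}(ℂ) be completely positive trace-preserving maps, and let ϱ_{1|0}, ϱ_{2|1}, ϱ_{2|0} be the partial transposes on the first factor of their respective Jamiołkowski images. Then the composition law N_{2|0} = N_{2|1} ∘ N_{1|0} holds if and only if ϱ_{2|0} = Tr_{H₁}[ (𝟙_{d₀} ⊗ ϱ_{2|1})^{T_{H₁}} (ϱ_{1|0} ⊗ 𝟙_{d₂}) ], where both sides are matrices in M_{d₀}(ℂ) ⊗ M_{d₂}(ℂ), the operators inside the partial trace act on M_{d₀}(ℂ) ⊗ M_{d₁}(ℂ) ⊗ M_{d₂}(ℂ), T_{H₁} denotes partial transposition on the middle factor, and Tr_{H₁} the partial trace over the middle factor. -/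

import Mathlib

open Matrix Kronecker
open scoped ComplexOrder

noncomputable section

/-- Jamiołkowski image of a linear map `N : M_a(ℂ) → M_b(ℂ)`:
`ρ = Σ_{i,j} |i⟩⟨j| ⊗ N(|j⟩⟨i|)`. -/
def jamImage {a b : ℕ} (N : Matrix (Fin a) (Fin a) ℂ →ₗ[ℂ] Matrix (Fin b) (Fin b) ℂ) :
    Matrix (Fin a × Fin b) (Fin a × Fin b) ℂ :=
  ∑ i : Fin a, ∑ j : Fin a,
    Matrix.single i j (1 : ℂ) ⊗ₖ N (Matrix.single j i (1 : ℂ))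

/-- Partial transpose on the first tensor factor of `M_a(ℂ) ⊗ M_b(ℂ)`. -/
def ptransposeA {a b : ℕ} (ρ : Matrix (Fin a × Fin b) (Fin a × Fin b) ℂ) :
    Matrix (Fin a × Fin b) (Fin a × Fin b) ℂ :=
  Matrix.of fun p q => ρ (q.1, p.2) (p.1, q.2)

/-- Partial trace over the second tensor factor. -/
def ptraceB {a b : ℕ} (ρ : Matrix (Fin a × Fin b) (Fin a × Fin b) ℂ) :
    Matrix (Fin a) (Fin a) ℂ :=
  Matrix.of fun i j => ∑ k : Fin b, ρ (i, k) (j, k)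

/-- Partial trace over the first tensor factor. -/
def ptraceA {a b : ℕ} (ρ : Matrix (Fin a × Fin b) (Fin a × Fin b) ℂ) :
    Matrix (Fin b) (Fin b) ℂ :=
  Matrix.of fun k l => ∑ i : Fin a, ρ (i, k) (i, l)

/-- The extension `id_n ⊗ Φ` of a map `Φ` on matrices, acting on `M_n(ℂ) ⊗ M_a(ℂ)`. -/
def idTensor {n a b : ℕ} (Φ : Matrix (Fin a) (Fin a) ℂ → Matrix (Fin b) (Fin b) ℂ)
    (X : Matrix (Fin n × Fin a) (Fin n × Fin a) ℂ) :
    Matrix (Fin n × Fin b) (Fin n × Fin b) ℂ :=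
  Matrix.of fun p q => Φ (Matrix.of fun i j => X (p.1, i) (q.1, j)) p.2 q.2

/-- Complete positivity: every identity extension `id_n ⊗ Φ` preserves positive
semidefiniteness. -/
def IsCP {a b : ℕ} (Φ : Matrix (Fin a) (Fin a) ℂ → Matrix (Fin b) (Fin b) ℂ) : Prop :=
  ∀ (n : ℕ) (X : Matrix (Fin n × Fin a) (Fin n × Fin a) ℂ),
    X.PosSemidef → (idTensor Φ X).PosSemidef

/-- Trace preservation. -/
def IsTP {a b : ℕ} (Φ : Matrix (Fin a) (Fin a) ℂ → Matrix (Fin b) (Fin b) ℂ) : Prop :=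
  ∀ σ, (Φ σ).trace = σ.trace

/-- Embedding `𝟙_{d₀} ⊗ B` of `B ∈ M_{d₁}(ℂ) ⊗ M_{d₂}(ℂ)` into the three-factor space. -/
def emb12 {d₀ d₁ d₂ : ℕ} (B : Matrix (Fin d₁ × Fin d₂) (Fin d₁ × Fin d₂) ℂ) :
    Matrix (Fin d₀ × Fin d₁ × Fin d₂) (Fin d₀ × Fin d₁ × Fin d₂) ℂ :=
  (1 : Matrix (Fin d₀) (Fin d₀) ℂ) ⊗ₖ B

/-- Embedding `B ⊗ 𝟙_{d₂}` of `B ∈ M_{d₀}(ℂ) ⊗ M_{d₁}(ℂ)` into the three-factor space. -/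
def emb01 {d₀ d₁ d₂ : ℕ} (B : Matrix (Fin d₀ × Fin d₁) (Fin d₀ × Fin d₁) ℂ) :
    Matrix (Fin d₀ × Fin d₁ × Fin d₂) (Fin d₀ × Fin d₁ × Fin d₂) ℂ :=
  Matrix.of fun p q => B (p.1, p.2.1) (q.1, q.2.1) * (if p.2.2 = q.2.2 then 1 else 0)

/-- Partial transposition on the middle factor of the three-factor space. -/
def ptransposeMid {d₀ d₁ d₂ : ℕ}
    (A : Matrix (Fin d₀ × Fin d₁ × Fin d₂) (Fin d₀ × Fin d₁ × Fin d₂) ℂ) :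
    Matrix (Fin d₀ × Fin d₁ × Fin d₂) (Fin d₀ × Fin d₁ × Fin d₂) ℂ :=
  Matrix.of fun p q => A (p.1, q.2.1, p.2.2) (q.1, p.2.1, q.2.2)

/-- Partial trace over the middle factor of the three-factor space. -/
def ptraceMid {d₀ d₁ d₂ : ℕ}
    (A : Matrix (Fin d₀ × Fin d₁ × Fin d₂) (Fin d₀ × Fin d₁ × Fin d₂) ℂ) :
    Matrix (Fin d₀ × Fin d₂) (Fin d₀ × Fin d₂) ℂ :=
  Matrix.of fun p q => ∑ m : Fin d₁, A (p.1, m, p.2) (q.1, m, q.2)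

/-- The link-product composition
`Tr_{H₁}[ (𝟙_{d₀} ⊗ ϱ_{2|1})^{T_{H₁}} (ϱ_{1|0} ⊗ 𝟙_{d₂}) ]`. -/
def linkProd {d₀ d₁ d₂ : ℕ} (ϱ10 : Matrix (Fin d₀ × Fin d₁) (Fin d₀ × Fin d₁) ℂ)
    (ϱ21 : Matrix (Fin d₁ × Fin d₂) (Fin d₁ × Fin d₂) ℂ) :
    Matrix (Fin d₀ × Fin d₂) (Fin d₀ × Fin d₂) ℂ :=
  ptraceMid (ptransposeMid (emb12 ϱ21) * emb01 ϱ10)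

lemma ptA_jam_apply {a b : ℕ} (N : Matrix (Fin a) (Fin a) ℂ →ₗ[ℂ] Matrix (Fin b) (Fin b) ℂ)
    (i j : Fin a) (k l : Fin b) :
    ptransposeA (jamImage N) (i, k) (j, l) = N (Matrix.single i j 1) k l := by
  simp only [ptransposeA, jamImage, Matrix.of_apply, Matrix.sum_apply,
    Matrix.kroneckerMap_apply, Matrix.single]
  simp [ite_and, Finset.sum_ite_eq, Finset.sum_ite_eq']

lemma linkProd_apply {d₀ d₁ d₂ : ℕ} (ϱ10 : Matrix (Fin d₀ × Fin d₁) (Fin d₀ × Fin d₁) ℂ)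
    (ϱ21 : Matrix (Fin d₁ × Fin d₂) (Fin d₁ × Fin d₂) ℂ) (i j : Fin d₀) (k l : Fin d₂) :
    linkProd ϱ10 ϱ21 (i, k) (j, l) =
      ∑ m : Fin d₁, ∑ b : Fin d₁, ϱ21 (b, k) (m, l) * ϱ10 (i, b) (j, m) := by
  simp only [linkProd, ptraceMid, Matrix.of_apply, Matrix.mul_apply, ptransposeMid,
    emb12, emb01, Matrix.kroneckerMap_apply, Fintype.sum_prod_type, Matrix.one_apply]
  simp [mul_comm, mul_assoc, Finset.mul_sum]

lemma stdBasis_expand {n m : ℕ} (M : Matrix (Fin n) (Fin m) ℂ) :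
    M = ∑ b : Fin n, ∑ c : Fin m, M b c • Matrix.single b c 1 := by
  ext b c
  simp only [Matrix.sum_apply, Matrix.smul_apply, Matrix.single, Matrix.of_apply,
    smul_eq_mul]
  simp [ite_and, Finset.sum_ite_eq, Finset.sum_ite_eq']

lemma comp_entry {d₀ d₁ d₂ : ℕ}
    (N10 : Matrix (Fin d₀) (Fin d₀) ℂ →ₗ[ℂ] Matrix (Fin d₁) (Fin d₁) ℂ)
    (N21 : Matrix (Fin d₁) (Fin d₁) ℂ →ₗ[ℂ] Matrix (Fin d₂) (Fin d₂) ℂ)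
    (i j : Fin d₀) (k l : Fin d₂) :
    N21 (N10 (Matrix.single i j 1)) k l =
      ∑ m : Fin d₁, ∑ b : Fin d₁,
        N21 (Matrix.single b m 1) k l * N10 (Matrix.single i j 1) b m := by
  conv_lhs => rw [stdBasis_expand (N10 (Matrix.single i j 1))]
  rw [map_sum]
  simp only [map_sum, _root_.map_smul, Matrix.sum_apply, Matrix.smul_apply, smul_eq_mul]
  rw [Finset.sum_comm]
  exact Finset.sum_congr rfl fun m _ => Finset.sum_congr rfl fun b _ => mul_comm _ _

lemma lmap_ext_std {a b : ℕ}
    (f g : Matrix (Fin a) (Fin a) ℂ →ₗ[ℂ] Matrix (Fin b) (Fin b) ℂ)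
    (h : ∀ i j, f (Matrix.single i j 1) = g (Matrix.single i j 1)) :
    f = g := by
  ext σ : 1
  conv_lhs => rw [stdBasis_expand σ]
  conv_rhs => rw [stdBasis_expand σ]
  simp only [map_sum, _root_.map_smul]
  exact Finset.sum_congr rfl fun i _ => Finset.sum_congr rfl fun j _ => by rw [h]

/-- for CPTP maps `N_{1|0}, N_{2|1}, N_{2|0}` with (first-factor partially
transposed) Jamiołkowski images `ϱ_{1|0}, ϱ_{2|1}, ϱ_{2|0}`, the composition law
`N_{2|0} = N_{2|1} ∘ N_{1|0}` holds iff
`ϱ_{2|0} = Tr_{H₁}[ (𝟙_{d₀} ⊗ ϱ_{2|1})^{T_{H₁}} (ϱ_{1|0} ⊗ 𝟙_{d₂}) ]`. -/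
theorem statement5 {d₀ d₁ d₂ : ℕ}
    (N10 : Matrix (Fin d₀) (Fin d₀) ℂ →ₗ[ℂ] Matrix (Fin d₁) (Fin d₁) ℂ)
    (N21 : Matrix (Fin d₁) (Fin d₁) ℂ →ₗ[ℂ] Matrix (Fin d₂) (Fin d₂) ℂ)
    (N20 : Matrix (Fin d₀) (Fin d₀) ℂ →ₗ[ℂ] Matrix (Fin d₂) (Fin d₂) ℂ)
    (h10 : IsCP ⇑N10 ∧ IsTP ⇑N10)
    (h21 : IsCP ⇑N21 ∧ IsTP ⇑N21)
    (h20 : IsCP ⇑N20 ∧ IsTP ⇑N20) :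
    N20 = N21 ∘ₗ N10 ↔
      ptransposeA (jamImage N20) =
        linkProd (ptransposeA (jamImage N10)) (ptransposeA (jamImage N21)) := by
  constructor
  · intro h
    subst h
    ext ⟨i, k⟩ ⟨j, l⟩
    rw [ptA_jam_apply, linkProd_apply]
    simp only [LinearMap.comp_apply]
    rw [comp_entry]
    exact Finset.sum_congr rfl fun m _ => Finset.sum_congr rfl fun b _ => by
      rw [ptA_jam_apply, ptA_jam_apply]
  · intro h
    refine lmap_ext_std _ _ fun i j => ?_
    ext k l
    have h' := congrFun (congrFun h (i, k)) (j, l)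
    rw [ptA_jam_apply, linkProd_apply] at h'
    simp only [LinearMap.comp_apply]
    rw [h', comp_entry]
    exact Finset.sum_congr rfl fun m _ => Finset.sum_congr rfl fun b _ => by
      rw [ptA_jam_apply, ptA_jam_apply]
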